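/- The function Φ_d(· | v) majorizes φ_d: for all u ∈ ℝ^p, (‖u‖ − d)² ≤ max{ g_d(u), h_d(v⊤u/‖v‖ − d) }. -/

import Mathlib

noncomputable def huber (R r : ℝ) : ℝ := if |r| < R then r ^ 2 else 2 * R * |r| - R ^ 2

theorem majorizer_majorizes (p : ℕ) (hp : 1 ≤ p) (d : ℝ) (hd : 0 < d)
    (v : EuclideanSpace ℝ (Fin p)) (hv : v ≠ 0) (u : EuclideanSpace ℝ (Fin p)) :
    (‖u‖ - d) ^ 2 ≤ max ((max 0 (‖u‖ - d)) ^ 2) (huber d ((inner ℝ v u : ℝ) / ‖v‖ - d)) := by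
  rcases le_or_gt d ‖u‖ with h | h
  · refine le_max_of_le_left ?_
    rw [max_eq_right (by linarith)]
  · refine le_max_of_le_right ?_
    set t : ℝ := (inner ℝ v u : ℝ) / ‖v‖ with ht
    have hvpos : (0:ℝ) < ‖v‖ := norm_pos_iff.mpr hv
    have htle : t ≤ ‖u‖ := by
      rw [ht, div_le_iff₀ hvpos]
      calc (inner ℝ v u : ℝ) ≤ ‖v‖ * ‖u‖ := real_inner_le_norm v u
        _ = ‖u‖ * ‖v‖ := by ring
    have hun : (0:ℝ) ≤ ‖u‖ := norm_nonneg u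
    have htd : t < d := lt_of_le_of_lt htle h
    unfold huber
    rcases lt_or_ge |t - d| d with hc | hc
    · rw [if_pos hc]
      have h1 : |t - d| = d - t := by rw [abs_of_nonpos (by linarith)]; ring
      have ht0 : 0 < t := by rw [h1] at hc; linarith
      have : d - ‖u‖ ≤ d - t := by linarith
      nlinarith
    · rw [if_neg (not_lt.mpr hc)]
      have h1 : |t - d| = d - t := by rw [abs_of_nonpos (by linarith)]; ring
      rw [h1] at hc ⊢
      have ht0 : t ≤ 0 := by linarith
      nlinarith
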